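/- Assume r ≥ 2 and ν ≥ q+r. Let K̄_*(z) ∈ ℝ^{(q+r−1)r×((q+r−1)r−q)} be the block matrix [[I_q⊗F(z) + S_q⊗F'(z), −ℓ_q·f^T ⊗ G(z)], [0, I_{r−1}⊗I_r − S_{r−1}⊗G(z)]], where ℓ_q is the last standard basis column vector of ℝ^q and f is the first standard basis column vector of ℝ^{r−1}. Then for every z ∈ ℝ the kernel of 𝓝^0(z), which has dimension νr − q, equals the set of all vectors (x_1, x_2) ∈ ℝ^{(q+r−1)r} × ℝ^{r(ν+1−q−r)} ≅ ℝ^{νr} such that x_1 lies in the column span of K̄_*(z) and x_2 is arbitrary. -/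

import Mathlib

open Matrix Kronecker

noncomputable section

/-- The `k × k` shift matrix with `(i,j)` entry `δ_{i+1,j}`. -/
def Sh (k : ℕ) : Matrix (Fin k) (Fin k) ℝ :=
  Matrix.of fun i j => if (i : ℕ) + 1 = (j : ℕ) then 1 else 0

/-- The matrix `A^k(z) ∈ ℝ^{q×r}`, with entries
`k!/(i!·j!·(k−i−j)!)·z^{k−i−j} = C(k,i)·C(k−i,j)·z^{k−i−j}` for `i+j ≤ k`, else `0`. -/
def Amat (q r k : ℕ) (z : ℝ) : Matrix (Fin q) (Fin r) ℝ :=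
  Matrix.of fun i j =>
    if (i : ℕ) + (j : ℕ) ≤ k then
      (Nat.choose k i : ℝ) * (Nat.choose (k - i) j : ℝ) * z ^ (k - i - j)
    else 0

/-- The block matrix `𝒜(z) ∈ ℝ^{μq×νr}` with `(i,j)` block `A^{i+j}(z)`. -/
def Acal (q r μ ν : ℕ) (z : ℝ) : Matrix (Fin μ × Fin q) (Fin ν × Fin r) ℝ :=
  Matrix.of fun p p' => Amat q r ((p.1 : ℕ) + (p'.1 : ℕ)) z p.2 p'.2

/-- `A^0 = e₀ f₀ᵀ ∈ ℝ^{q×r}`. -/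
def A0 (q r : ℕ) : Matrix (Fin q) (Fin r) ℝ :=
  Matrix.of fun a b => if (a : ℕ) = 0 ∧ (b : ℕ) = 0 then 1 else 0

/-- The block matrix `Ā ∈ ℝ^{μq×νr}` with `(i,j)` block `(S_qᵀ)^j · A^0 · S_r^i`. -/
def Abar (q r μ ν : ℕ) : Matrix (Fin μ × Fin q) (Fin ν × Fin r) ℝ :=
  Matrix.of fun p p' =>
    (((Sh q)ᵀ) ^ (p'.1 : ℕ) * A0 q r * (Sh r) ^ (p.1 : ℕ)) p.2 p'.2

/-- `J_k(z) = z·I_k + S_kᵀ`. -/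
def Jmat (k : ℕ) (z : ℝ) : Matrix (Fin k) (Fin k) ℝ := z • 1 + (Sh k)ᵀ

/-- The block lower-triangular matrix `𝓛_{m,k}(z)` with `(i,j)` block `C(i,j)·J_k(z)^{i−j}`
for `i ≥ j` and `0` otherwise. -/
def Lmat (m k : ℕ) (z : ℝ) : Matrix (Fin m × Fin k) (Fin m × Fin k) ℝ :=
  Matrix.of fun p p' =>
    if (p'.1 : ℕ) ≤ (p.1 : ℕ) then
      (Nat.choose p.1 p'.1 : ℝ) * ((Jmat k z) ^ ((p.1 : ℕ) - (p'.1 : ℕ))) p.2 p'.2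
    else 0

/-- Natural (block row-major) identification of `Fin (m*n)` with `Fin m × Fin n`. -/
def bIdx (m n : ℕ) : Fin (m * n) → Fin m × Fin n := fun x => finProdFinEquiv.symm x

/-- `M^{(n)}(z) ∈ ℝ^{q×r}`, the `n`-th derivative of `M(z) = u(z)w(z)`,
whose `(a,b)` entry is the `n`-th derivative of `z^{a+b}`. -/
def Md (q r n : ℕ) (z : ℝ) : Matrix (Fin q) (Fin r) ℝ :=
  Matrix.of fun a b => iteratedDeriv n (fun t : ℝ => t ^ ((a : ℕ) + (b : ℕ))) z

/-- The block matrix `𝓜(z) ∈ ℝ^{μq×νr}` with `(i,j)` block `M^{(i+j)}(z)`. -/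
def Mcal (q r μ ν : ℕ) (z : ℝ) : Matrix (Fin μ × Fin q) (Fin ν × Fin r) ℝ :=
  Matrix.of fun p p' => Md q r ((p.1 : ℕ) + (p'.1 : ℕ)) z p.2 p'.2

/-- The block matrix `𝓝(z) ∈ ℝ^{μq×νr}` with `(i,j)` block `M^{(i+j)}(z)/(i!·j!)`. -/
def Ncal (q r μ ν : ℕ) (z : ℝ) : Matrix (Fin μ × Fin q) (Fin ν × Fin r) ℝ :=
  Matrix.of fun p p' =>
    Md q r ((p.1 : ℕ) + (p'.1 : ℕ)) z p.2 p'.2 /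
      ((Nat.factorial (p.1 : ℕ) : ℝ) * (Nat.factorial (p'.1 : ℕ) : ℝ))

/-- `𝓝^0(z) = (M(z)/0!, …, M^{(ν−1)}(z)/(ν−1)!) ∈ ℝ^{q×νr}`. -/
def Ncal0 (q r ν : ℕ) (z : ℝ) : Matrix (Fin q) (Fin ν × Fin r) ℝ :=
  Matrix.of fun a p => Md q r (p.1 : ℕ) z a p.2 / (Nat.factorial (p.1 : ℕ) : ℝ)

/-- `𝓜^0(z) = (M(z), M'(z), …, M^{(ν−1)}(z)) ∈ ℝ^{q×νr}`. -/
def M0cal (q r ν : ℕ) (z : ℝ) : Matrix (Fin q) (Fin ν × Fin r) ℝ :=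
  Matrix.of fun a p => Md q r (p.1 : ℕ) z a p.2

/-- `U_q(z)` with columns `u(z), u'(z), …, u^{(q−1)}(z)`, where `u_a(z) = z^a`. -/
def Uq (q : ℕ) (z : ℝ) : Matrix (Fin q) (Fin q) ℝ :=
  Matrix.of fun a j => iteratedDeriv (j : ℕ) (fun t : ℝ => t ^ (a : ℕ)) z

/-- `W_r(z)` with rows `w(z), w'(z), …, w^{(r−1)}(z)`, where `w_b(z) = z^b`. -/
def Wrm (r : ℕ) (z : ℝ) : Matrix (Fin r) (Fin r) ℝ :=
  Matrix.of fun i b => iteratedDeriv (i : ℕ) (fun t : ℝ => t ^ (b : ℕ)) z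

/-- `Ũ_m(z)` with entries `C(i,j)·z^{i−j}` for `i ≥ j` and `0` otherwise. -/
def Ut (m : ℕ) (z : ℝ) : Matrix (Fin m) (Fin m) ℝ :=
  Matrix.of fun i j =>
    if (j : ℕ) ≤ (i : ℕ) then (Nat.choose i j : ℝ) * z ^ ((i : ℕ) - (j : ℕ)) else 0

/-- `W̃_m(z)` with entries `C(j,i)·z^{j−i}` for `j ≥ i` and `0` otherwise. -/
def Wt (m : ℕ) (z : ℝ) : Matrix (Fin m) (Fin m) ℝ :=
  Matrix.of fun i j =>
    if (i : ℕ) ≤ (j : ℕ) then (Nat.choose j i : ℝ) * z ^ ((j : ℕ) - (i : ℕ)) else 0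

/-- `D_m`, the diagonal matrix with `(i,i)` entry `i!`. -/
def Dm (m : ℕ) : Matrix (Fin m) (Fin m) ℝ :=
  Matrix.diagonal fun i => (Nat.factorial (i : ℕ) : ℝ)

/-- The block matrix `Â` whose `(i,j)` block has `(k,l)` entry `C(i+j,i)` if `k+l = i+j`, else 0. -/
def Ahat (q r μ ν : ℕ) : Matrix (Fin μ × Fin q) (Fin ν × Fin r) ℝ :=
  Matrix.of fun p p' =>
    if (p.2 : ℕ) + (p'.2 : ℕ) = (p.1 : ℕ) + (p'.1 : ℕ) then
      (Nat.choose ((p.1 : ℕ) + (p'.1 : ℕ)) (p.1 : ℕ) : ℝ)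
    else 0

/-- `F(z) ∈ ℝ^{r×(r−1)}` with `F_{ii} = −z`, `F_{i+1,i} = 1`, else `0`. -/
def Fm (r : ℕ) (z : ℝ) : Matrix (Fin r) (Fin (r - 1)) ℝ :=
  Matrix.of fun a b =>
    if (a : ℕ) = (b : ℕ) then -z else if (a : ℕ) = (b : ℕ) + 1 then 1 else 0

/-- `F'(z)`, the (constant) derivative of `F(z)`: `−1` on the diagonal, `0` elsewhere. -/
def Fm' (r : ℕ) : Matrix (Fin r) (Fin (r - 1)) ℝ :=
  Matrix.of fun a b => if (a : ℕ) = (b : ℕ) then -1 else 0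

/-- `G(z) ∈ ℝ^{r×r}` with entries `z^{j−i−1}` for `j > i`, else `0`. -/
def Gm (r : ℕ) (z : ℝ) : Matrix (Fin r) (Fin r) ℝ :=
  Matrix.of fun i j => if (i : ℕ) < (j : ℕ) then z ^ ((j : ℕ) - (i : ℕ) - 1) else 0

/-- entrywise `j`-th derivative `G^{(n)}(z)`. -/
def Gd (r n : ℕ) (z : ℝ) : Matrix (Fin r) (Fin r) ℝ :=
  Matrix.of fun i j =>
    iteratedDeriv n (fun t : ℝ => if (i : ℕ) < (j : ℕ) then t ^ ((j : ℕ) - (i : ℕ) - 1) else 0) z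

/-- the row vector `w(z)` with entries `z^b`. -/
def wv (r : ℕ) (z : ℝ) : Fin r → ℝ := fun b => z ^ (b : ℕ)

/-- the `n`-th derivative `w^{(n)}(z)`. -/
def wd (r n : ℕ) (z : ℝ) : Fin r → ℝ := fun b => iteratedDeriv n (fun t : ℝ => t ^ (b : ℕ)) z

/-- the `n`-th derivative `u^{(n)}(z)` of the column vector `u(z)` with entries `z^a`. -/
def ud (q n : ℕ) (z : ℝ) : Fin q → ℝ := fun a => iteratedDeriv n (fun t : ℝ => t ^ (a : ℕ)) z

/-- The matrix `K̄(z)`: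
`[[I_q⊗F(z) + S_q⊗F'(z), −ℓ_q fᵀ ⊗ G(z)], [0, I_{ν−q}⊗I_r − S_{ν−q}⊗G(z)]]`. -/
def Kbar (q r ν : ℕ) (z : ℝ) :
    Matrix (Fin ν × Fin r) ((Fin q × Fin (r - 1)) ⊕ (Fin (ν - q) × Fin r)) ℝ :=
  Matrix.of fun p s =>
    match s with
    | Sum.inl c =>
        (if (p.1 : ℕ) = (c.1 : ℕ) then Fm r z p.2 c.2 else 0) +
        (if (p.1 : ℕ) + 1 = (c.1 : ℕ) then Fm' r p.2 c.2 else 0)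
    | Sum.inr c =>
        (if (p.1 : ℕ) = q + (c.1 : ℕ) then (if p.2 = c.2 then 1 else 0) else 0) +
        (if (p.1 : ℕ) + 1 = q + (c.1 : ℕ) then -(Gm r z p.2 c.2) else 0)

/-- `F_k(z) ∈ ℝ^{(r−k)×(r−1−k)}`. -/
def Fmk (r k : ℕ) (z : ℝ) : Matrix (Fin (r - k)) (Fin (r - (k + 1))) ℝ :=
  Matrix.of fun a b =>
    if (a : ℕ) = (b : ℕ) then -z else if (a : ℕ) = (b : ℕ) + 1 then 1 else 0

/-- `F_k'(z)`, the (constant) derivative of `F_k(z)`. -/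
def Fmk' (r k : ℕ) : Matrix (Fin (r - k)) (Fin (r - (k + 1))) ℝ :=
  Matrix.of fun a b => if (a : ℕ) = (b : ℕ) then -1 else 0

/-- `K_k(z) = I_ν ⊗ F_k(z) + S_ν ⊗ F_k'(z)`. -/
def Kk (ν r k : ℕ) (z : ℝ) :
    Matrix (Fin ν × Fin (r - k)) (Fin ν × Fin (r - (k + 1))) ℝ :=
  (1 : Matrix (Fin ν) (Fin ν) ℝ) ⊗ₖ Fmk r k z + Sh ν ⊗ₖ Fmk' r k

/-- `KP ν r z m = K_0(z) · K_1(z) ⋯ K_{m−1}(z)` (so `KP ν r z μ = 𝒦^{μ−1}(z)`). -/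
def KP (ν r : ℕ) (z : ℝ) : (m : ℕ) → Matrix (Fin ν × Fin r) (Fin ν × Fin (r - m)) ℝ
  | 0 => Matrix.of fun p p' => if p.1 = p'.1 ∧ (p.2 : ℕ) = (p'.2 : ℕ) then 1 else 0
  | m + 1 => KP ν r z m * Kk ν r m z

/-- `𝒜^0 = (A^0, A^1, …, A^{ν−1}) ∈ ℝ^{q×νr}` (at `z = 0`). -/
def A0row (q r ν : ℕ) : Matrix (Fin q) (Fin ν × Fin r) ℝ :=
  Matrix.of fun a p =>
    if (a : ℕ) + (p.2 : ℕ) = (p.1 : ℕ) then (Nat.choose (p.1 : ℕ) (a : ℕ) : ℝ) else 0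

/-- `B^k ∈ ℝ^{r×q}` with entries `(−1)^i·C(q,k+1)` if `i+j = k`, else `0`. -/
def Bk (q r k : ℕ) : Matrix (Fin r) (Fin q) ℝ :=
  Matrix.of fun i j =>
    if (i : ℕ) + (j : ℕ) = k then (-1 : ℝ) ^ (i : ℕ) * (Nat.choose q (k + 1) : ℝ) else 0

/-- `𝓑^0 ∈ ℝ^{νr×q}`, the blocks `B^0, …, B^{ν−1}` stacked vertically. -/
def B0cal (q r ν : ℕ) : Matrix (Fin ν × Fin r) (Fin q) ℝ :=
  Matrix.of fun p j => Bk q r (p.1 : ℕ) p.2 j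

/-- Left multiplication by a fixed matrix, as a linear map. -/
def mulLeftLM {m n p : Type*} [Fintype n] (M : Matrix m n ℝ) :
    Matrix n p ℝ →ₗ[ℝ] Matrix m p ℝ where
  toFun X := M * X
  map_add' X Y := Matrix.mul_add M X Y
  map_smul' c X := by simp [Matrix.mul_smul]

/-- The right inverse `𝓜(z)⁺`. -/
def Mplus (q r μ ν : ℕ) (z : ℝ) : Matrix (Fin ν × Fin r) (Fin μ × Fin q) ℝ :=
  ((1 : Matrix (Fin ν) (Fin ν) ℝ) ⊗ₖ (Wrm r z)⁻¹) * (Lmat ν r 0)⁻¹ *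
    (Abar q r μ ν)ᵀ * (Lmat μ q 0)⁻¹ * ((1 : Matrix (Fin μ) (Fin μ) ℝ) ⊗ₖ (Uq q z)⁻¹)

section Aux13

open Finset

lemma iterDeriv_pow (m k : ℕ) (z : ℝ) :
    iteratedDeriv k (fun t : ℝ => t ^ m) z = (m.descFactorial k : ℝ) * z ^ (m - k) := by
  induction k generalizing z with
  | zero => simp
  | succ k ih =>
    rw [iteratedDeriv_succ]
    have hfun : (iteratedDeriv k (fun t : ℝ => t ^ m))
        = fun t : ℝ => (m.descFactorial k : ℝ) * t ^ (m - k) := funext fun t => ih t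
    rw [hfun, deriv_const_mul _ (differentiableAt_pow _), deriv_pow_field,
      Nat.descFactorial_succ, Nat.cast_mul]
    have h1 : m - (k + 1) = (m - k) - 1 := by omega
    rw [h1]
    ring

lemma Md_eq (q r n : ℕ) (z : ℝ) (a : Fin q) (b : Fin r) :
    Md q r n z a b = (((a : ℕ) + (b : ℕ)).descFactorial n : ℝ) * z ^ ((a : ℕ) + (b : ℕ) - n) := by
  simp only [Md, Matrix.of_apply, iterDeriv_pow]

lemma Ncal0_apply (q r ν : ℕ) (z : ℝ) (a : Fin q) (p : Fin ν × Fin r) :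
    Ncal0 q r ν z a p =
      ((((a : ℕ) + (p.2 : ℕ)).choose (p.1 : ℕ) : ℝ)) * z ^ ((a : ℕ) + (p.2 : ℕ) - (p.1 : ℕ)) := by
  have hfac : ((Nat.factorial (p.1 : ℕ) : ℝ)) ≠ 0 := by
    exact_mod_cast Nat.factorial_ne_zero _
  simp only [Ncal0, Matrix.of_apply, Md_eq, Nat.descFactorial_eq_factorial_mul_choose]
  push_cast
  field_simp

/-- The matrix of "row conditions". -/
def Rm (q r n : ℕ) (z : ℝ) : Matrix (Fin q) (Fin n × Fin r) ℝ :=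
  Matrix.of fun k p =>
    if (k : ℕ) ≤ (p.1 : ℕ) then
      (((p.2 : ℕ).choose ((p.1 : ℕ) - (k : ℕ)) : ℝ)) * z ^ ((p.2 : ℕ) - ((p.1 : ℕ) - (k : ℕ)))
    else 0

lemma vandermonde_trunc (A B i q : ℕ) (hA : A < q) :
    (∑ k ∈ Finset.range q, if k ≤ i then A.choose k * B.choose (i - k) else 0)
      = (A + B).choose i := by
  rw [Nat.add_choose_eq, Finset.Nat.sum_antidiagonal_eq_sum_range_succ
    (fun x y => A.choose x * B.choose y)]
  have h1 : (∑ k ∈ Finset.range q, if k ≤ i then A.choose k * B.choose (i - k) else 0)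
      = ∑ k ∈ Finset.range (q + i + 1), if k ≤ i then A.choose k * B.choose (i - k) else 0 := by
    apply Finset.sum_subset (Finset.range_subset_range.mpr (by omega))
    intro k hk hk'
    simp only [Finset.mem_range, not_lt] at hk'
    split
    · rw [Nat.choose_eq_zero_of_lt (by omega), zero_mul]
    · rfl
  have h2 : (∑ k ∈ Finset.range (i + 1), A.choose k * B.choose (i - k))
      = ∑ k ∈ Finset.range (q + i + 1), if k ≤ i then A.choose k * B.choose (i - k) else 0 := by
    rw [← Finset.sum_subset (Finset.range_subset_range.mpr (by omega) :
        Finset.range (i + 1) ⊆ Finset.range (q + i + 1))]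
    · apply Finset.sum_congr rfl
      intro k hk
      rw [if_pos (by simp only [Finset.mem_range] at hk; omega)]
    · intro k hk hk'
      simp only [Finset.mem_range, not_lt] at hk'
      rw [if_neg (by omega)]
  rw [h1, h2]

lemma Ncal0_factor (q r ν : ℕ) (z : ℝ) :
    Ncal0 q r ν z = Ut q z * Rm q r ν z := by
  ext a p
  obtain ⟨i, b⟩ := p
  rw [Matrix.mul_apply, Ncal0_apply]
  have key : ∀ k : Fin q, Ut q z a k * Rm q r ν z k (i, b)
      = (if (k : ℕ) ≤ (i : ℕ) then
          (((a : ℕ).choose (k : ℕ) * (b : ℕ).choose ((i : ℕ) - (k : ℕ)) : ℕ) : ℝ) else 0)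
        * z ^ ((a : ℕ) + (b : ℕ) - (i : ℕ)) := by
    intro k
    simp only [Ut, Rm, Matrix.of_apply]
    by_cases h1 : (k : ℕ) ≤ (i : ℕ)
    · rw [if_pos h1, if_pos h1]
      by_cases h2 : (k : ℕ) ≤ (a : ℕ)
      · rw [if_pos h2]
        by_cases h3 : (i : ℕ) - (k : ℕ) ≤ (b : ℕ)
        · have hexp : (a : ℕ) - (k : ℕ) + ((b : ℕ) - ((i : ℕ) - (k : ℕ)))
              = (a : ℕ) + (b : ℕ) - (i : ℕ) := by omega
          rw [← hexp, pow_add]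
          push_cast
          ring
        · rw [Nat.choose_eq_zero_of_lt (by omega : (b : ℕ) < (i : ℕ) - (k : ℕ))]
          push_cast
          ring
      · rw [if_neg h2, Nat.choose_eq_zero_of_lt (by omega : (a : ℕ) < (k : ℕ))]
        push_cast
        ring
    · rw [if_neg h1, if_neg h1, mul_zero, zero_mul]
  rw [Finset.sum_congr rfl fun k _ => key k, ← Finset.sum_mul]
  congr 1
  rw [Fin.sum_univ_eq_sum_range
    (fun k => if k ≤ (i : ℕ) then
      (((a : ℕ).choose k * (b : ℕ).choose ((i : ℕ) - k) : ℕ) : ℝ) else 0)]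
  rw [show ((((a : ℕ) + (b : ℕ)).choose (i : ℕ) : ℝ))
      = ((∑ k ∈ Finset.range q, if k ≤ (i : ℕ) then
          (a : ℕ).choose k * (b : ℕ).choose ((i : ℕ) - k) else 0 : ℕ) : ℝ) by
    rw [vandermonde_trunc _ _ _ _ a.isLt]]
  rw [Nat.cast_sum]
  apply Finset.sum_congr rfl
  intro k _
  split <;> simp

lemma Ut_det (q : ℕ) (z : ℝ) : (Ut q z).det = 1 := by
  have htri : (Ut q z).BlockTriangular OrderDual.toDual := by
    intro i j h
    have hij : i < j := h
    simp only [Ut, Matrix.of_apply]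
    rw [if_neg (by have := Fin.lt_def.mp hij; omega)]
  rw [Matrix.det_of_lowerTriangular (Ut q z) htri]
  apply Finset.prod_eq_one
  intro i _
  simp [Ut]

lemma Ut_isUnit (q : ℕ) (z : ℝ) : IsUnit (Ut q z).det := by
  rw [Ut_det]; exact isUnit_one

lemma Ut_mulVec_injective (q : ℕ) (z : ℝ) : Function.Injective (Ut q z).mulVec := by
  have := (Ut q z).invertibleOfIsUnitDet (Ut_isUnit q z)
  exact Matrix.mulVec_injective_of_invertible _

lemma Rm_mulVec_surjective (q r n : ℕ) (z : ℝ) (hq : 0 < q) (hr : 1 ≤ r)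
    (hn : q + r - 1 ≤ n) : Function.Surjective (Rm q r n z).mulVec := by
  have hcol : ∀ k' : Fin q, (k' : ℕ) + r - 1 < n := fun k' => by
    have := k'.isLt; omega
  have hrr : r - 1 < r := by omega
  set e : Fin q → Fin n × Fin r := fun k' => (⟨(k' : ℕ) + r - 1, hcol k'⟩, ⟨r - 1, hrr⟩) with he
  set T : Matrix (Fin q) (Fin q) ℝ := Matrix.of (fun k k' => Rm q r n z k (e k')) with hT
  set Sel : Matrix (Fin n × Fin r) (Fin q) ℝ :=
    Matrix.of (fun p k' => if p = e k' then 1 else 0) with hSel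
  have hmul : Rm q r n z * Sel = T := by
    ext k k'
    rw [Matrix.mul_apply]
    simp only [hSel, Matrix.of_apply, mul_ite, mul_one, mul_zero]
    rw [Finset.sum_ite_eq' Finset.univ (e k') (fun p => Rm q r n z k p)]
    simp [hT]
  have hTdet : IsUnit T.det := by
    have htri : T.BlockTriangular OrderDual.toDual := by
      intro i j h
      have hij : (i : ℕ) < (j : ℕ) := Fin.lt_def.mp (h : i < j)
      simp only [hT, Matrix.of_apply, he, Rm]
      split
      · rw [Nat.choose_eq_zero_of_lt (by omega)]
        push_cast; ring
      · rfl
    rw [Matrix.det_of_lowerTriangular T htri]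
    have hdiag : ∀ i : Fin q, T i i = 1 := by
      intro i
      simp only [hT, Matrix.of_apply, he, Rm]
      rw [if_pos (by omega)]
      rw [show (i : ℕ) + r - 1 - (i : ℕ) = r - 1 by omega]
      simp
    rw [Finset.prod_congr rfl fun i _ => hdiag i]
    simp
  intro v
  refine ⟨Sel.mulVec (T⁻¹.mulVec v), ?_⟩
  rw [Matrix.mulVec_mulVec, hmul, Matrix.mulVec_mulVec, Matrix.mul_nonsing_inv _ hTdet,
    Matrix.one_mulVec]

lemma Rm_vanish (q r n : ℕ) (z : ℝ) (k : Fin q) (p : Fin n × Fin r)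
    (hp : q + r - 1 ≤ (p.1 : ℕ)) : Rm q r n z k p = 0 := by
  simp only [Rm, Matrix.of_apply]
  split
  · rw [Nat.choose_eq_zero_of_lt (by have := p.2.isLt; have := k.isLt; omega)]
    push_cast; ring
  · rfl

lemma Rm_restrict (q r ν : ℕ) (z : ℝ) (hν : q + r - 1 ≤ ν) (x : Fin ν × Fin r → ℝ) :
    (Rm q r ν z).mulVec x
      = (Rm q r (q + r - 1) z).mulVec (fun p => x (Fin.castLE hν p.1, p.2)) := by
  funext k
  simp only [Matrix.mulVec, dotProduct]
  set e : Fin (q + r - 1) × Fin r ↪ Fin ν × Fin r :=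
    (Fin.castLEEmb hν).prodMap (Function.Embedding.refl _) with he
  have h1 : (∑ p : Fin (q + r - 1) × Fin r,
        Rm q r (q + r - 1) z k p * x (Fin.castLE hν p.1, p.2))
      = ∑ p ∈ Finset.univ.map e, Rm q r ν z k p * x p := by
    rw [Finset.sum_map]
    apply Finset.sum_congr rfl
    intro p _
    rfl
  rw [h1]
  refine (Finset.sum_subset (Finset.subset_univ _) ?_).symm
  intro p _ hp
  have hge : q + r - 1 ≤ (p.1 : ℕ) := by
    by_contra hlt
    push_neg at hlt
    exact hp (Finset.mem_map.mpr ⟨(⟨(p.1 : ℕ), hlt⟩, p.2), Finset.mem_univ _, by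
      simp [he, Fin.castLEEmb]⟩)
  rw [Rm_vanish q r ν z k p hge, zero_mul]

lemma fin_sum_ite_eq {m : ℕ} (c : ℕ) (f : Fin m → ℝ) :
    (∑ p : Fin m, if (p : ℕ) = c then f p else 0) = if h : c < m then f ⟨c, h⟩ else 0 := by
  split
  · next h =>
    rw [Finset.sum_eq_single (⟨c, h⟩ : Fin m)]
    · simp
    · intro b _ hb
      rw [if_neg (fun hc => hb (Fin.ext hc))]
    · intro hb; exact absurd (Finset.mem_univ _) hb
  · next h =>
    apply Finset.sum_eq_zero
    intro p _
    have hp := p.isLt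
    rw [if_neg (fun hc => h (by omega))]

lemma fin_sum_ite_succ_eq {m : ℕ} (c : ℕ) (f : Fin m → ℝ) :
    (∑ p : Fin m, if (p : ℕ) + 1 = c then f p else 0)
      = if h : c - 1 < m ∧ 1 ≤ c then f ⟨c - 1, h.1⟩ else 0 := by
  split
  · next h =>
    rw [Finset.sum_eq_single (⟨c - 1, h.1⟩ : Fin m)]
    · rw [if_pos (show ((⟨c - 1, h.1⟩ : Fin m) : ℕ) + 1 = c by
        show c - 1 + 1 = c; omega)]
    · intro b _ hb
      refine if_neg (fun hc => hb (Fin.ext (show (b : ℕ) = c - 1 by omega)))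
    · intro hb; exact absurd (Finset.mem_univ _) hb
  · next h =>
    apply Finset.sum_eq_zero
    intro p _
    rw [if_neg (fun hc => h ⟨by omega, by omega⟩)]

lemma hockey_nat (c2 j : ℕ) (hj : 1 ≤ j) :
    (∑ p2 ∈ Finset.range c2, p2.choose (j - 1)) = c2.choose j := by
  obtain ⟨j', rfl⟩ : ∃ j', j = j' + 1 := ⟨j - 1, by omega⟩
  simp only [Nat.add_sub_cancel]
  rcases Nat.eq_zero_or_pos c2 with hc | hc
  · subst hc
    simp [Nat.choose_eq_zero_of_lt]
  · obtain ⟨c, rfl⟩ : ∃ c, c2 = c + 1 := ⟨c2 - 1, by omega⟩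
    rw [Finset.range_eq_Ico, Finset.Ico_add_one_right_eq_Icc]
    by_cases hjc : j' ≤ c
    · rw [← Finset.sum_subset (Finset.Icc_subset_Icc_left (Nat.zero_le _) :
          Finset.Icc j' c ⊆ Finset.Icc 0 c)]
      · exact Nat.sum_Icc_choose c j'
      · intro x hx hx'
        simp only [Finset.mem_Icc] at hx hx'
        exact Nat.choose_eq_zero_of_lt (by omega)
    · rw [Nat.choose_eq_zero_of_lt (by omega)]
      apply Finset.sum_eq_zero
      intro x hx
      simp only [Finset.mem_Icc] at hx
      exact Nat.choose_eq_zero_of_lt (by omega)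

lemma hockey_real (r c2 j : ℕ) (hj : 1 ≤ j) (hc2 : c2 ≤ r) :
    (∑ p2 : Fin r, if (p2 : ℕ) < c2 then ((p2 : ℕ).choose (j - 1) : ℝ) else 0)
      = (c2.choose j : ℝ) := by
  rw [Fin.sum_univ_eq_sum_range (fun t => if t < c2 then ((t.choose (j - 1) : ℕ) : ℝ) else 0)]
  rw [← Finset.sum_subset (Finset.range_subset_range.mpr hc2) (fun x _ hx => by
    rw [if_neg (by simp only [Finset.mem_range, not_lt] at hx; omega)])]
  rw [Finset.sum_congr rfl (fun x hx => if_pos (Finset.mem_range.mp hx))]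
  rw [← Nat.cast_sum, hockey_nat c2 j hj]

end Aux13
section Aux13b

open Finset

lemma Rm_apply' (q r n : ℕ) (z : ℝ) (k : Fin q) (i : ℕ) (hi : i < n) (b : Fin r) :
    Rm q r n z k (⟨i, hi⟩, b)
      = if (k : ℕ) ≤ i then
          (((b : ℕ).choose (i - (k : ℕ)) : ℝ)) * z ^ ((b : ℕ) - (i - (k : ℕ)))
        else 0 := rfl

lemma Fm_split (r : ℕ) (z : ℝ) (p2 : Fin r) (c2 : Fin (r - 1)) :
    Fm r z p2 c2 = (if (p2 : ℕ) = (c2 : ℕ) then -z else 0)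
      + (if (p2 : ℕ) = (c2 : ℕ) + 1 then (1 : ℝ) else 0) := by
  simp only [Fm, Matrix.of_apply]
  split_ifs <;> first | (exfalso; omega) | ring

lemma scalar_inl (c2 j' : ℕ) (z : ℝ) :
    ((c2.choose (j' + 1) : ℝ)) * z ^ (c2 - (j' + 1)) * (-z)
      + (((c2 + 1).choose (j' + 1) : ℝ)) * z ^ (c2 + 1 - (j' + 1))
      - ((c2.choose j' : ℝ)) * z ^ (c2 - j') = 0 := by
  rw [Nat.choose_succ_succ c2 j']
  have e1 : c2 + 1 - (j' + 1) = c2 - j' := by omega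
  rw [e1, Nat.cast_add]
  by_cases hjc : j' + 1 ≤ c2
  · have e2 : c2 - j' = (c2 - (j' + 1)) + 1 := by omega
    rw [e2, pow_succ]
    ring
  · rw [Nat.choose_eq_zero_of_lt (show c2 < j' + 1 by omega)]
    push_cast
    ring

lemma gm_term (p2 c2 j : ℕ) (z : ℝ) (hj : 1 ≤ j) :
    ((p2.choose (j - 1) : ℝ)) * z ^ (p2 - (j - 1))
        * -(if p2 < c2 then z ^ (c2 - p2 - 1) else 0)
      = -((if p2 < c2 then (p2.choose (j - 1) : ℝ) else 0) * z ^ (c2 - j)) := by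
  split_ifs with hlt
  · by_cases hbig : j - 1 ≤ p2
    · have hE : p2 - (j - 1) + (c2 - p2 - 1) = c2 - j := by omega
      calc ((p2.choose (j - 1) : ℝ)) * z ^ (p2 - (j - 1)) * -(z ^ (c2 - p2 - 1))
          = -(((p2.choose (j - 1) : ℝ)) * (z ^ (p2 - (j - 1)) * z ^ (c2 - p2 - 1))) := by ring
        _ = -(((p2.choose (j - 1) : ℝ)) * z ^ (c2 - j)) := by rw [← pow_add, hE]
    · rw [Nat.choose_eq_zero_of_lt (by omega)]
      push_cast; ring
  · ring

lemma RK (q r : ℕ) (z : ℝ) (hq : 0 < q) (hr : 2 ≤ r) :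
    Rm q r (q + r - 1) z * Kbar q r (q + r - 1) z = 0 := by
  ext k s
  rw [Matrix.mul_apply, Matrix.zero_apply, Fintype.sum_prod_type]
  have hk := k.isLt
  cases s with
  | inl c =>
    obtain ⟨c1, c2⟩ := c
    have hc1 : (c1 : ℕ) < q + r - 1 := by have := c1.isLt; omega
    have hc2r : (c2 : ℕ) < r := by have := c2.isLt; omega
    have hc2r' : (c2 : ℕ) + 1 < r := by have := c2.isLt; omega
    simp only [Kbar, Matrix.of_apply]
    have key : ∀ p1 : Fin (q + r - 1),
        (∑ p2 : Fin r, Rm q r (q + r - 1) z k (p1, p2) *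
          ((if (p1 : ℕ) = (c1 : ℕ) then Fm r z p2 c2 else 0) +
           (if (p1 : ℕ) + 1 = (c1 : ℕ) then Fm' r p2 c2 else 0)))
        = (if (p1 : ℕ) = (c1 : ℕ) then
            ∑ p2 : Fin r, Rm q r (q + r - 1) z k (p1, p2) * Fm r z p2 c2 else 0) +
          (if (p1 : ℕ) + 1 = (c1 : ℕ) then
            ∑ p2 : Fin r, Rm q r (q + r - 1) z k (p1, p2) * Fm' r p2 c2 else 0) := by
      intro p1
      split_ifs <;> simp [mul_add, Finset.sum_add_distrib]
    rw [Finset.sum_congr rfl fun p1 _ => key p1, Finset.sum_add_distrib,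
      fin_sum_ite_eq, fin_sum_ite_succ_eq, dif_pos hc1]
    have hS1 : (∑ p2 : Fin r, Rm q r (q + r - 1) z k (⟨(c1 : ℕ), hc1⟩, p2) * Fm r z p2 c2)
        = Rm q r (q + r - 1) z k (⟨(c1 : ℕ), hc1⟩, ⟨(c2 : ℕ), hc2r⟩) * (-z)
          + Rm q r (q + r - 1) z k (⟨(c1 : ℕ), hc1⟩, ⟨(c2 : ℕ) + 1, hc2r'⟩) := by
      have hterm : ∀ p2 : Fin r,
          Rm q r (q + r - 1) z k (⟨(c1 : ℕ), hc1⟩, p2) * Fm r z p2 c2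
          = (if (p2 : ℕ) = (c2 : ℕ) then
              Rm q r (q + r - 1) z k (⟨(c1 : ℕ), hc1⟩, p2) * (-z) else 0)
            + (if (p2 : ℕ) = (c2 : ℕ) + 1 then
              Rm q r (q + r - 1) z k (⟨(c1 : ℕ), hc1⟩, p2) else 0) := by
        intro p2
        rw [Fm_split]
        split_ifs <;> ring
      rw [Finset.sum_congr rfl fun p2 _ => hterm p2, Finset.sum_add_distrib,
        fin_sum_ite_eq, fin_sum_ite_eq, dif_pos hc2r, dif_pos hc2r']
    rw [hS1]
    by_cases h1c : 1 ≤ (c1 : ℕ)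
    · have hrow2 : (c1 : ℕ) - 1 < q + r - 1 := by omega
      rw [dif_pos ⟨hrow2, h1c⟩]
      have hS2 : (∑ p2 : Fin r,
            Rm q r (q + r - 1) z k (⟨(c1 : ℕ) - 1, hrow2⟩, p2) * Fm' r p2 c2)
          = -(Rm q r (q + r - 1) z k (⟨(c1 : ℕ) - 1, hrow2⟩, ⟨(c2 : ℕ), hc2r⟩)) := by
        have hterm : ∀ p2 : Fin r,
            Rm q r (q + r - 1) z k (⟨(c1 : ℕ) - 1, hrow2⟩, p2) * Fm' r p2 c2
            = (if (p2 : ℕ) = (c2 : ℕ) then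
                -(Rm q r (q + r - 1) z k (⟨(c1 : ℕ) - 1, hrow2⟩, p2)) else 0) := by
          intro p2
          simp only [Fm', Matrix.of_apply]
          split_ifs <;> ring
        rw [Finset.sum_congr rfl fun p2 _ => hterm p2, fin_sum_ite_eq, dif_pos hc2r]
      rw [hS2, Rm_apply', Rm_apply', Rm_apply']
      by_cases hklt : (k : ℕ) ≤ (c1 : ℕ) - 1
      · rw [if_pos (show (k : ℕ) ≤ (c1 : ℕ) by omega),
          if_pos (show (k : ℕ) ≤ (c1 : ℕ) by omega), if_pos hklt]
        have ej : (c1 : ℕ) - 1 - (k : ℕ) = ((c1 : ℕ) - (k : ℕ)) - 1 := by omega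
        obtain ⟨j', hj'⟩ : ∃ j', (c1 : ℕ) - (k : ℕ) = j' + 1 :=
          ⟨(c1 : ℕ) - (k : ℕ) - 1, by omega⟩
        rw [ej, hj', Nat.add_sub_cancel]
        have := scalar_inl (c2 : ℕ) j' z
        linarith
      · by_cases hkle : (k : ℕ) ≤ (c1 : ℕ)
        · have hj0 : (c1 : ℕ) - (k : ℕ) = 0 := by omega
          rw [if_pos hkle, if_pos hkle, if_neg hklt, hj0]
          simp only [Nat.choose_zero_right, Nat.cast_one, one_mul, Nat.sub_zero, pow_succ]
          ring
        · rw [if_neg hkle, if_neg hkle, if_neg hklt]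
          ring
    · rw [dif_neg (fun hcon => absurd hcon.2 (by omega))]
      rw [Rm_apply', Rm_apply']
      by_cases hk0 : (k : ℕ) ≤ (c1 : ℕ)
      · have hj0 : (c1 : ℕ) - (k : ℕ) = 0 := by omega
        rw [if_pos hk0, if_pos hk0, hj0]
        simp only [Nat.choose_zero_right, Nat.cast_one, one_mul, Nat.sub_zero, pow_succ]
        ring
      · rw [if_neg hk0, if_neg hk0]
        ring
  | inr c =>
    obtain ⟨c1, c2⟩ := c
    have hc1 : (c1 : ℕ) < (q + r - 1) - q := c1.isLt
    have hrow1 : q + (c1 : ℕ) < q + r - 1 := by omega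
    have hrow2 : q + (c1 : ℕ) - 1 < q + r - 1 := by omega
    simp only [Kbar, Matrix.of_apply]
    have key : ∀ p1 : Fin (q + r - 1),
        (∑ p2 : Fin r, Rm q r (q + r - 1) z k (p1, p2) *
          ((if (p1 : ℕ) = q + (c1 : ℕ) then (if p2 = c2 then (1 : ℝ) else 0) else 0) +
           (if (p1 : ℕ) + 1 = q + (c1 : ℕ) then -(Gm r z p2 c2) else 0)))
        = (if (p1 : ℕ) = q + (c1 : ℕ) then
            ∑ p2 : Fin r, Rm q r (q + r - 1) z k (p1, p2) * (if p2 = c2 then (1 : ℝ) else 0)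
          else 0) +
          (if (p1 : ℕ) + 1 = q + (c1 : ℕ) then
            ∑ p2 : Fin r, Rm q r (q + r - 1) z k (p1, p2) * -(Gm r z p2 c2) else 0) := by
      intro p1
      split_ifs <;> simp [mul_add, Finset.sum_add_distrib]
    rw [Finset.sum_congr rfl fun p1 _ => key p1, Finset.sum_add_distrib,
      fin_sum_ite_eq, fin_sum_ite_succ_eq, dif_pos hrow1, dif_pos ⟨hrow2, by omega⟩]
    have hS1 : (∑ p2 : Fin r, Rm q r (q + r - 1) z k (⟨q + (c1 : ℕ), hrow1⟩, p2) *
          (if p2 = c2 then (1 : ℝ) else 0))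
        = Rm q r (q + r - 1) z k (⟨q + (c1 : ℕ), hrow1⟩, c2) := by
      simp only [mul_ite, mul_one, mul_zero]
      rw [Finset.sum_ite_eq' Finset.univ c2
        (fun p2 => Rm q r (q + r - 1) z k (⟨q + (c1 : ℕ), hrow1⟩, p2))]
      simp
    have he : q + (c1 : ℕ) - 1 - (k : ℕ) = q + (c1 : ℕ) - (k : ℕ) - 1 := by omega
    have hterm : ∀ p2 : Fin r,
        Rm q r (q + r - 1) z k (⟨q + (c1 : ℕ) - 1, hrow2⟩, p2) * -(Gm r z p2 c2)
        = -((if (p2 : ℕ) < (c2 : ℕ)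
              then ((p2 : ℕ).choose (q + (c1 : ℕ) - (k : ℕ) - 1) : ℝ) else 0)
            * z ^ ((c2 : ℕ) - (q + (c1 : ℕ) - (k : ℕ)))) := by
      intro p2
      rw [Rm_apply', if_pos (show (k : ℕ) ≤ q + (c1 : ℕ) - 1 by omega), he]
      simp only [Gm, Matrix.of_apply]
      exact gm_term (p2 : ℕ) (c2 : ℕ) (q + (c1 : ℕ) - (k : ℕ)) z (by omega)
    have hS2 : (∑ p2 : Fin r,
          Rm q r (q + r - 1) z k (⟨q + (c1 : ℕ) - 1, hrow2⟩, p2) * -(Gm r z p2 c2))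
        = -((((c2 : ℕ).choose (q + (c1 : ℕ) - (k : ℕ)) : ℝ))
            * z ^ ((c2 : ℕ) - (q + (c1 : ℕ) - (k : ℕ)))) := by
      rw [Finset.sum_congr rfl fun p2 _ => hterm p2, Finset.sum_neg_distrib,
        ← Finset.sum_mul,
        hockey_real r (c2 : ℕ) (q + (c1 : ℕ) - (k : ℕ)) (by omega) (le_of_lt c2.isLt)]
    rw [hS1, hS2, Rm_apply', if_pos (show (k : ℕ) ≤ q + (c1 : ℕ) by omega)]
    ring

end Aux13b
section Aux13c

open Finset

lemma Kbar_inj (q r : ℕ) (z : ℝ) (hq : 0 < q) (hr : 2 ≤ r)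
    (c : (Fin q × Fin (r - 1)) ⊕ (Fin ((q + r - 1) - q) × Fin r) → ℝ)
    (h : (Kbar q r (q + r - 1) z).mulVec c = 0) : c = 0 := by
  have heq : ∀ p : Fin (q + r - 1) × Fin r,
      (∑ c' : Fin q × Fin (r - 1),
        Kbar q r (q + r - 1) z p (Sum.inl c') * c (Sum.inl c'))
      + (∑ c' : Fin ((q + r - 1) - q) × Fin r,
        Kbar q r (q + r - 1) z p (Sum.inr c') * c (Sum.inr c')) = 0 := by
    intro p
    have h0 := congrFun h p
    simp only [Matrix.mulVec, dotProduct, Pi.zero_apply] at h0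
    rwa [Fintype.sum_sum_type] at h0
  -- Step 1: the inr block of c vanishes, by downward induction on the block index.
  have hinr : ∀ t : ℕ, ∀ c1 : Fin ((q + r - 1) - q), r - 1 ≤ (c1 : ℕ) + t →
      ∀ c2 : Fin r, c (Sum.inr (c1, c2)) = 0 := by
    intro t
    induction t with
    | zero =>
      intro c1 hc1 c2
      exact absurd hc1 (by have := c1.isLt; omega)
    | succ t ih =>
      intro c1 hc1 c2
      have hrow : q + (c1 : ℕ) < q + r - 1 := by have := c1.isLt; omega
      have h0 := heq (⟨q + (c1 : ℕ), hrow⟩, c2)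
      have hval : ((⟨q + (c1 : ℕ), hrow⟩ : Fin (q + r - 1)) : ℕ) = q + (c1 : ℕ) := rfl
      have hz1 : (∑ c' : Fin q × Fin (r - 1),
          Kbar q r (q + r - 1) z (⟨q + (c1 : ℕ), hrow⟩, c2) (Sum.inl c') * c (Sum.inl c'))
          = 0 := by
        apply Finset.sum_eq_zero
        intro c' _
        have hc'1 : (c'.1 : ℕ) < q := c'.1.isLt
        simp only [Kbar, Matrix.of_apply, hval]
        rw [if_neg (by omega), if_neg (by omega)]
        ring
      have hz2 : (∑ c' : Fin ((q + r - 1) - q) × Fin r,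
          Kbar q r (q + r - 1) z (⟨q + (c1 : ℕ), hrow⟩, c2) (Sum.inr c') * c (Sum.inr c'))
          = c (Sum.inr (c1, c2)) := by
        rw [Finset.sum_eq_single (c1, c2)]
        · simp [Kbar, hval, show ¬(q + (c1 : ℕ) + 1 = q + (c1 : ℕ)) from by omega]
        · intro b _ hb
          obtain ⟨b1, b2⟩ := b
          by_cases hb1 : (b1 : ℕ) = (c1 : ℕ) + 1
          · rw [ih b1 (by omega) b2, mul_zero]
          · simp only [Kbar, Matrix.of_apply, hval]
            by_cases hb1' : (b1 : ℕ) = (c1 : ℕ)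
            · have hb2 : ¬(c2 = b2) := fun hc =>
                hb (by rw [Prod.mk.injEq]; exact ⟨Fin.ext hb1', hc.symm⟩)
              rw [if_pos (by omega), if_neg hb2, if_neg (by omega)]
              ring
            · rw [if_neg (by omega), if_neg (by omega)]
              ring
        · intro hmem
          exact absurd (Finset.mem_univ _) hmem
      rw [hz1, hz2, zero_add] at h0
      exact h0
  have hinrAll : ∀ c1 : Fin ((q + r - 1) - q), ∀ c2 : Fin r, c (Sum.inr (c1, c2)) = 0 :=
    fun c1 c2 => hinr r c1 (by omega) c2
  -- Step 2: the inl block vanishes, by downward induction on the inner index.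
  have hinl : ∀ t : ℕ, ∀ c1 : Fin q, ∀ c2 : Fin (r - 1), r - 1 ≤ (c2 : ℕ) + t →
      c (Sum.inl (c1, c2)) = 0 := by
    intro t
    induction t with
    | zero =>
      intro c1 c2 hc2
      exact absurd hc2 (by have := c2.isLt; omega)
    | succ t ih =>
      intro c1 c2 hc2
      have hrow : (c1 : ℕ) < q + r - 1 := by have := c1.isLt; omega
      have hcol : (c2 : ℕ) + 1 < r := by have := c2.isLt; omega
      have h0 := heq (⟨(c1 : ℕ), hrow⟩, ⟨(c2 : ℕ) + 1, hcol⟩)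
      have hval : ((⟨(c1 : ℕ), hrow⟩ : Fin (q + r - 1)) : ℕ) = (c1 : ℕ) := rfl
      have hval2 : ((⟨(c2 : ℕ) + 1, hcol⟩ : Fin r) : ℕ) = (c2 : ℕ) + 1 := rfl
      have hz2 : (∑ c' : Fin ((q + r - 1) - q) × Fin r,
          Kbar q r (q + r - 1) z (⟨(c1 : ℕ), hrow⟩, ⟨(c2 : ℕ) + 1, hcol⟩) (Sum.inr c')
            * c (Sum.inr c')) = 0 := by
        apply Finset.sum_eq_zero
        intro c' _
        obtain ⟨a, b⟩ := c'
        rw [hinrAll a b, mul_zero]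
      have hz1 : (∑ c' : Fin q × Fin (r - 1),
          Kbar q r (q + r - 1) z (⟨(c1 : ℕ), hrow⟩, ⟨(c2 : ℕ) + 1, hcol⟩) (Sum.inl c')
            * c (Sum.inl c')) = c (Sum.inl (c1, c2)) := by
        rw [Finset.sum_eq_single (c1, c2)]
        · simp [Kbar, Fm, Fm', hval, hval2,
            show ¬((c2 : ℕ) + 1 = (c2 : ℕ)) from by omega,
            show ¬((c1 : ℕ) + 1 = (c1 : ℕ)) from by omega]
        · intro b _ hb
          obtain ⟨b1, b2⟩ := b
          by_cases hb2 : (b2 : ℕ) = (c2 : ℕ) + 1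
          · rw [ih b1 b2 (by omega), mul_zero]
          · have hne : ¬((b1 : ℕ) = (c1 : ℕ) ∧ (b2 : ℕ) = (c2 : ℕ)) := fun hcon =>
              hb (by rw [Prod.mk.injEq]; exact ⟨Fin.ext hcon.1, Fin.ext hcon.2⟩)
            simp only [Kbar, Fm, Fm', Matrix.of_apply, hval, hval2]
            split_ifs <;> first | (exfalso; omega) | ring
        · intro hmem
          exact absurd (Finset.mem_univ _) hmem
      rw [hz1, hz2, add_zero] at h0
      exact h0
  funext s
  simp only [Pi.zero_apply]
  cases s with
  | inl a =>
    obtain ⟨c1, c2⟩ := a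
    exact hinl r c1 c2 (by omega)
  | inr a =>
    obtain ⟨c1, c2⟩ := a
    exact hinrAll c1 c2

end Aux13c
section Aux13d

lemma ker_Rm_eq_range_Kbar (q r : ℕ) (z : ℝ) (hq : 0 < q) (hr : 2 ≤ r) :
    LinearMap.range (Kbar q r (q + r - 1) z).mulVecLin
      = LinearMap.ker (Rm q r (q + r - 1) z).mulVecLin := by
  have hle : LinearMap.range (Kbar q r (q + r - 1) z).mulVecLin
      ≤ LinearMap.ker (Rm q r (q + r - 1) z).mulVecLin := by
    rintro y ⟨cvec, rfl⟩
    rw [LinearMap.mem_ker]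
    simp only [Matrix.mulVecLin_apply]
    rw [Matrix.mulVec_mulVec, RK q r z hq hr, Matrix.zero_mulVec]
  apply (Submodule.eq_of_le_of_finrank_le hle ?_)
  have hkin : Function.Injective (Kbar q r (q + r - 1) z).mulVecLin := by
    rw [← LinearMap.ker_eq_bot, LinearMap.ker_eq_bot']
    intro m hm
    exact Kbar_inj q r z hq hr m (by simpa [Matrix.mulVecLin_apply] using hm)
  have h1 : Module.finrank ℝ (LinearMap.range (Kbar q r (q + r - 1) z).mulVecLin)
      = q * (r - 1) + ((q + r - 1) - q) * r := by
    rw [LinearMap.finrank_range_of_inj hkin]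
    simp [Module.finrank_fintype_fun_eq_card]
  have h2 : Module.finrank ℝ (LinearMap.ker (Rm q r (q + r - 1) z).mulVecLin)
      = (q + r - 1) * r - q := by
    have hsurj : Function.Surjective (Rm q r (q + r - 1) z).mulVecLin := by
      intro v
      obtain ⟨y, hy⟩ := Rm_mulVec_surjective q r (q + r - 1) z hq (by omega) (le_refl _) v
      exact ⟨y, by simpa [Matrix.mulVecLin_apply] using hy⟩
    have hrn := LinearMap.finrank_range_add_finrank_ker (Rm q r (q + r - 1) z).mulVecLin
    rw [LinearMap.range_eq_top.mpr hsurj, finrank_top] at hrn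
    have hd1 : Module.finrank ℝ (Fin q → ℝ) = q := Module.finrank_fin_fun ℝ
    have hd2 : Module.finrank ℝ (Fin (q + r - 1) × Fin r → ℝ) = (q + r - 1) * r := by
      simp [Module.finrank_fintype_fun_eq_card]
    rw [hd1, hd2] at hrn
    generalize hN : (q + r - 1) * r = N at hrn ⊢
    omega
  rw [h1, h2]
  obtain ⟨r', rfl⟩ : ∃ r', r = r' + 2 := ⟨r - 2, by omega⟩
  have harith : (q + (r' + 2) - 1) * (r' + 2)
      = q * (r' + 2 - 1) + ((q + (r' + 2) - 1) - q) * (r' + 2) + q := by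
    have e1 : q + (r' + 2) - 1 = q + r' + 1 := by omega
    have e2 : r' + 2 - 1 = r' + 1 := by omega
    have e3 : (q + (r' + 2) - 1) - q = r' + 1 := by omega
    rw [e3, e1, e2]
    ring
  rw [harith, Nat.add_sub_cancel]

end Aux13d
theorem statement13 (q r ν : ℕ) (hq : 0 < q) (hr : 2 ≤ r) (hν : q + r ≤ ν) :
    ∀ z : ℝ,
      Module.finrank ℝ (LinearMap.ker (Ncal0 q r ν z).mulVecLin) = ν * r - q ∧
      (∀ x : Fin ν × Fin r → ℝ,
        (Ncal0 q r ν z).mulVec x = 0 ↔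
          (fun p : Fin (q + r - 1) × Fin r =>
              x (Fin.castLE (by omega) p.1, p.2)) ∈
            LinearMap.range (Kbar q r (q + r - 1) z).mulVecLin) := by
  intro z
  have hμ : q + r - 1 ≤ ν := by omega
  have hfac := Ncal0_factor q r ν z
  have hUt := Ut_mulVec_injective q z
  have hkereq : ∀ x : Fin ν × Fin r → ℝ,
      (Ncal0 q r ν z).mulVec x = 0 ↔ (Rm q r ν z).mulVec x = 0 := by
    intro x
    rw [hfac, ← Matrix.mulVec_mulVec]
    constructor
    · intro hx
      exact hUt (by rw [hx, Matrix.mulVec_zero])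
    · intro hx
      rw [hx, Matrix.mulVec_zero]
  constructor
  · have hker2 : LinearMap.ker (Ncal0 q r ν z).mulVecLin
        = LinearMap.ker (Rm q r ν z).mulVecLin := by
      ext x
      simp only [LinearMap.mem_ker, Matrix.mulVecLin_apply]
      exact hkereq x
    rw [hker2]
    have hsurj : Function.Surjective (Rm q r ν z).mulVecLin := by
      intro v
      obtain ⟨y, hy⟩ := Rm_mulVec_surjective q r ν z hq (by omega) hμ v
      exact ⟨y, by simpa [Matrix.mulVecLin_apply] using hy⟩
    have hrn := LinearMap.finrank_range_add_finrank_ker (Rm q r ν z).mulVecLin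
    rw [LinearMap.range_eq_top.mpr hsurj, finrank_top] at hrn
    have hd1 : Module.finrank ℝ (Fin q → ℝ) = q := Module.finrank_fin_fun ℝ
    have hd2 : Module.finrank ℝ (Fin ν × Fin r → ℝ) = ν * r := by
      simp [Module.finrank_fintype_fun_eq_card]
    rw [hd1, hd2] at hrn
    generalize hN : ν * r = N at hrn ⊢
    omega
  · intro x
    rw [hkereq x, Rm_restrict q r ν z hμ x, ker_Rm_eq_range_Kbar q r z hq hr]
    simp only [LinearMap.mem_ker, Matrix.mulVecLin_apply]
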